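/- For any word ω ∈ {1,2,3,4}*, E(ω1, ω2) = (13/84) E(ω), where E(ω1,ω2) is the distortion error on J_{ω1}∪J_{ω2} with respect to its centroid. -/

import Mathlib

open MeasureTheory ProbabilityTheory
open scoped ENNReal

noncomputable section

abbrev E2 : Type := EuclideanSpace ℝ (Fin 2)

/-- The point (a,b) of the Euclidean plane. -/
def pt (a b : ℝ) : E2 := (WithLp.equiv 2 (Fin 2 → ℝ)).symm ![a, b]

/-- The four generating similarities S₁,…,S₄ (indexed 0,…,3) of the Sierpiński carpet. -/
def S : Fin 4 → E2 → E2
  | 0 => fun x => pt (x 0 / 3) (x 1 / 3)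
  | 1 => fun x => pt (x 0 / 3 + 2/3) (x 1 / 3)
  | 2 => fun x => pt (x 0 / 3) (x 1 / 3 + 2/3)
  | 3 => fun x => pt (x 0 / 3 + 2/3) (x 1 / 3 + 2/3)

/-- The self-affinity equation P = (1/8)P∘S₁⁻¹ + (1/8)P∘S₂⁻¹ + (3/8)P∘S₃⁻¹ + (3/8)P∘S₄⁻¹. -/
def carpetEq (P : Measure E2) : Prop :=
  P = (1/8 : ℝ≥0∞) • P.map (S 0) + (1/8 : ℝ≥0∞) • P.map (S 1)
    + (3/8 : ℝ≥0∞) • P.map (S 2) + (3/8 : ℝ≥0∞) • P.map (S 3)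

/-- The unit square [0,1]². -/
def unitSq : Set E2 := {x | ∀ i, x i ∈ Set.Icc (0:ℝ) 1}

/-- S_ω = S_{ω₁} ∘ ⋯ ∘ S_{ω_k} for a word ω. -/
def Sw (w : List (Fin 4)) : E2 → E2 := fun x => w.foldr S x

/-- The basic square J_ω = S_ω([0,1]²). -/
def Jw (w : List (Fin 4)) : Set E2 := Sw w '' unitSq

/-- The basic square J_i of the first level. -/
def Jset (i : Fin 4) : Set E2 := S i '' unitSq

/-- The mass centroid (conditional expectation) of P on a set A. -/
def ctr (P : Measure E2) (A : Set E2) : E2 := (P A).toReal⁻¹ • ∫ x in A, x ∂P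

/-- E(ω) : distortion error on J_ω about its centroid a(ω) = S_ω(1/2,3/4). -/
def Err (P : Measure E2) (w : List (Fin 4)) : ℝ :=
  ∫ x in Jw w, ‖x - Sw w (pt (1/2) (3/4))‖^2 ∂P

/-- E(ωi, ωj) : distortion error on J_{ωi} ∪ J_{ωj} about its centroid. -/
def Epair (P : Measure E2) (w : List (Fin 4)) (i j : Fin 4) : ℝ :=
  ∫ x in (Jw (w ++ [i]) ∪ Jw (w ++ [j])),
    ‖x - ctr P (Jw (w ++ [i]) ∪ Jw (w ++ [j]))‖^2 ∂P

/- ## basic geometry -/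

lemma pt_ext (v : E2) : v = pt (v 0) (v 1) := by
  ext i; fin_cases i <;> rfl

def tv : Fin 4 → E2
  | 0 => pt 0 0
  | 1 => pt (2/3) 0
  | 2 => pt 0 (2/3)
  | 3 => pt (2/3) (2/3)

lemma S_apply (i : Fin 4) (x : E2) : S i x = (3:ℝ)⁻¹ • x + tv i := by
  fin_cases i <;>
  · ext j
    fin_cases j <;>
    · show (S _ x) _ = ((3:ℝ)⁻¹ • x + tv _) _
      simp [S, tv, pt, PiLp.smul_apply, PiLp.add_apply]
      ring

lemma S_cont (i : Fin 4) : Continuous (S i) := by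
  simp only [funext (S_apply i)]
  exact ((continuous_id (X := E2)).const_smul ((3:ℝ)⁻¹)).add continuous_const

lemma S_meas (i : Fin 4) : Measurable (S i) := (S_cont i).measurable

lemma S_inj (i : Fin 4) : Function.Injective (S i) := by
  intro x y h
  simp only [S_apply] at h
  have := add_right_cancel h
  have h2 := congrArg (fun v : E2 => (3:ℝ) • v) this
  simpa [smul_smul] using h2

lemma S_sub (i : Fin 4) (x y : E2) : S i x - S i y = (3:ℝ)⁻¹ • (x - y) := by
  simp [S_apply, smul_sub]

lemma Sw_cont (w : List (Fin 4)) : Continuous (Sw w) := by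
  induction w with
  | nil => exact continuous_id
  | cons i w ih =>
      have : Sw (i :: w) = (S i) ∘ (Sw w) := rfl
      rw [this]; exact (S_cont i).comp ih

lemma Sw_cons (i : Fin 4) (w : List (Fin 4)) (x : E2) : Sw (i :: w) x = S i (Sw w x) := rfl

lemma Sw_append (w v : List (Fin 4)) (x : E2) : Sw (w ++ v) x = Sw w (Sw v x) := by
  induction w with
  | nil => rfl
  | cons i w ih => simp [Sw_cons, ih]

lemma Sw_sub (w : List (Fin 4)) (x y : E2) :
    Sw w x - Sw w y = ((3:ℝ)⁻¹ ^ w.length) • (x - y) := by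
  induction w with
  | nil => simp [Sw]
  | cons i w ih =>
      rw [Sw_cons, Sw_cons, S_sub, ih, smul_smul]
      rw [List.length_cons, pow_succ]
      ring_nf

lemma Sw_midpoint (w : List (Fin 4)) (u v : E2) :
    Sw w ((2:ℝ)⁻¹ • (u + v)) = (2:ℝ)⁻¹ • (Sw w u + Sw w v) := by
  induction w with
  | nil => simp [Sw]
  | cons i w ih =>
      rw [Sw_cons, Sw_cons, Sw_cons, ih, S_apply, S_apply, S_apply]
      rw [smul_add, smul_add, smul_add, smul_smul, smul_smul]
      rw [show ((3:ℝ)⁻¹ * 2⁻¹) = (2⁻¹ * 3⁻¹ : ℝ) by ring]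
      rw [← smul_smul]
      module

/- ## unit square facts -/

lemma isClosed_unitSq : IsClosed unitSq := by
  have : unitSq = ⋂ i, (fun x : E2 => x i) ⁻¹' Set.Icc (0:ℝ) 1 := by
    ext x; simp [unitSq]
  rw [this]
  exact isClosed_iInter fun i => IsClosed.preimage (PiLp.continuous_apply 2 _ i) isClosed_Icc

lemma norm_le_of_unitSq {x : E2} (hx : x ∈ unitSq) : ‖x‖ ≤ 2 := by
  have h : ‖x‖ = Real.sqrt (∑ i, ‖x i‖ ^ 2) := EuclideanSpace.norm_eq x
  rw [h]
  have hb : (∑ i, ‖x i‖ ^ 2) ≤ 4 := by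
    rw [Fin.sum_univ_two]
    have h0 := hx 0; have h1 := hx 1
    simp only [Set.mem_Icc] at h0 h1
    simp only [Real.norm_eq_abs]
    nlinarith [abs_nonneg (x 0), abs_nonneg (x 1),
      abs_le.2 ⟨(by linarith [h0.1] : -(1:ℝ) ≤ x 0), h0.2⟩,
      abs_le.2 ⟨(by linarith [h1.1] : -(1:ℝ) ≤ x 1), h1.2⟩]
  calc Real.sqrt (∑ i, ‖x i‖ ^ 2) ≤ Real.sqrt 4 := Real.sqrt_le_sqrt hb
    _ = 2 := by rw [show (4:ℝ) = 2^2 by norm_num, Real.sqrt_sq (by norm_num)]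

lemma isCompact_unitSq : IsCompact unitSq := by
  apply Metric.isCompact_of_isClosed_isBounded isClosed_unitSq
  exact (isBounded_iff_forall_norm_le).2 ⟨2, fun x hx => norm_le_of_unitSq hx⟩

lemma unitSq_nonempty : unitSq.Nonempty :=
  ⟨pt 0 0, by intro i; fin_cases i <;> simp [pt] <;> norm_num⟩

lemma S_mapsTo (i : Fin 4) : Set.MapsTo (S i) unitSq unitSq := by
  intro x hx j
  have h0 := hx 0; have h1 := hx 1
  simp only [Set.mem_Icc] at h0 h1
  fin_cases i <;> fin_cases j <;>
  · show _ ∈ Set.Icc (0:ℝ) 1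
    simp [S, pt]
    constructor <;> first
      | linarith [h0.1, h0.2]
      | linarith [h1.1, h1.2]

lemma Sw_mapsTo (w : List (Fin 4)) : Set.MapsTo (Sw w) unitSq unitSq := by
  induction w with
  | nil => exact Set.mapsTo_id _
  | cons i w ih => exact (S_mapsTo i).comp ih

lemma Jw_subset (w : List (Fin 4)) : Jw w ⊆ unitSq := (Sw_mapsTo w).image_subset

lemma Jw_measurable (w : List (Fin 4)) : MeasurableSet (Jw w) :=
  ((isCompact_unitSq.image (Sw_cont w)).isClosed).measurableSet

lemma mem_Jset_coords {i : Fin 4} {y : E2} (hy : y ∈ Jset i) :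
    y 0 ∈ Set.Icc (![0,2/3,0,2/3] i) (![0,2/3,0,2/3] i + 1/3) ∧
    y 1 ∈ Set.Icc (![0,0,2/3,2/3] i) (![0,0,2/3,2/3] i + 1/3) := by
  obtain ⟨x, hx, rfl⟩ := hy
  have h0 := hx 0; have h1 := hx 1
  simp only [Set.mem_Icc] at h0 h1
  fin_cases i <;>
  · simp only [S, pt, Set.mem_Icc]
    norm_num
    constructor <;> constructor <;> linarith [h0.1, h0.2, h1.1, h1.2]

lemma Jset_disjoint {i j : Fin 4} (h : i ≠ j) : ∀ y, y ∈ Jset i → y ∉ Jset j := by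
  intro y hi hj
  have a := mem_Jset_coords hi
  have b := mem_Jset_coords hj
  simp only [Set.mem_Icc] at a b
  obtain ⟨⟨a1, a2⟩, a3, a4⟩ := a
  obtain ⟨⟨b1, b2⟩, b3, b4⟩ := b
  fin_cases i <;> fin_cases j <;> first
    | exact h rfl
    | (norm_num at a1 a2 a3 a4 b1 b2 b3 b4 ⊢; linarith)

/- ## support of P -/

section Support
open Metric

def Ar (r : ℝ) : Set E2 := {x | r ≤ infDist x unitSq}

lemma Ar_measurable (r : ℝ) : MeasurableSet (Ar r) :=
  (isClosed_le continuous_const (continuous_infDist_pt unitSq)).measurableSet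

lemma infDist_S_le (i : Fin 4) (x : E2) :
    infDist (S i x) unitSq ≤ infDist x unitSq / 3 := by
  obtain ⟨z, hz, hdz⟩ := isCompact_unitSq.exists_infDist_eq_dist unitSq_nonempty x
  have h1 : infDist (S i x) unitSq ≤ dist (S i x) (S i z) :=
    infDist_le_dist_of_mem (S_mapsTo i hz)
  have h2 : dist (S i x) (S i z) = dist x z / 3 := by
    rw [dist_eq_norm, dist_eq_norm, S_sub, norm_smul]
    simp; ring
  rw [hdz]; linarith

lemma preimage_Ar (i : Fin 4) (r : ℝ) : S i ⁻¹' Ar r ⊆ Ar (3 * r) := by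
  intro x hx
  have h1 : r ≤ infDist (S i x) unitSq := hx
  have h2 := infDist_S_le i x
  show 3 * r ≤ infDist x unitSq
  linarith

variable {P : Measure E2} [IsProbabilityMeasure P]

lemma P_Ar_le (hP : carpetEq P) (r : ℝ) : P (Ar r) ≤ P (Ar (3 * r)) := by
  have key : ∀ i : Fin 4, P.map (S i) (Ar r) ≤ P (Ar (3 * r)) := by
    intro i
    rw [Measure.map_apply (S_meas i) (Ar_measurable r)]
    exact measure_mono (preimage_Ar i r)
  calc P (Ar r)
      = ((1/8 : ℝ≥0∞) • P.map (S 0) + (1/8 : ℝ≥0∞) • P.map (S 1)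
        + (3/8 : ℝ≥0∞) • P.map (S 2) + (3/8 : ℝ≥0∞) • P.map (S 3)) (Ar r) := by rw [← hP]
    _ = (1/8 : ℝ≥0∞) * P.map (S 0) (Ar r) + (1/8 : ℝ≥0∞) * P.map (S 1) (Ar r)
        + (3/8 : ℝ≥0∞) * P.map (S 2) (Ar r) + (3/8 : ℝ≥0∞) * P.map (S 3) (Ar r) := by
        simp [Measure.add_apply, Measure.smul_apply]
    _ ≤ (1/8 : ℝ≥0∞) * P (Ar (3*r)) + (1/8 : ℝ≥0∞) * P (Ar (3*r))
        + (3/8 : ℝ≥0∞) * P (Ar (3*r)) + (3/8 : ℝ≥0∞) * P (Ar (3*r)) := by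
        exact add_le_add (add_le_add (add_le_add
          (mul_le_mul_right (key 0) _) (mul_le_mul_right (key 1) _))
          (mul_le_mul_right (key 2) _)) (mul_le_mul_right (key 3) _)
    _ = P (Ar (3*r)) := by
        rw [← add_mul, ← add_mul, ← add_mul]
        rw [show (1/8 : ℝ≥0∞) + 1/8 + 3/8 + 3/8 = 1 by
          rw [ENNReal.div_add_div_same, ENNReal.div_add_div_same, ENNReal.div_add_div_same]
          norm_num
          exact ENNReal.div_self (by norm_num) (by norm_num)]
        rw [one_mul]

lemma P_Ar_zero (hP : carpetEq P) {r : ℝ} (hr : 0 < r) : P (Ar r) = 0 := by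
  have step : ∀ n : ℕ, P (Ar r) ≤ P (Ar (3 ^ n * r)) := by
    intro n
    induction n with
    | zero => simp
    | succ n ih =>
        refine ih.trans ?_
        have := P_Ar_le hP (3 ^ n * r)
        rwa [show 3 * (3 ^ n * r) = 3 ^ (n + 1) * r by ring] at this
  have hanti : Antitone (fun n : ℕ => Ar (3 ^ n * r)) := by
    intro n m hnm x hx
    have h1 : (3:ℝ) ^ n * r ≤ 3 ^ m * r := by
      have : (3:ℝ) ^ n ≤ 3 ^ m := pow_le_pow_right₀ (by norm_num) hnm
      nlinarith
    exact h1.trans hx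
  have hempty : (⋂ n : ℕ, Ar (3 ^ n * r)) = ∅ := by
    ext x
    simp only [Set.mem_iInter, Set.mem_empty_iff_false, iff_false, not_forall]
    obtain ⟨n, hn⟩ := pow_unbounded_of_one_lt (infDist x unitSq / r) (by norm_num : (1:ℝ) < 3)
    refine ⟨n, ?_⟩
    show ¬ (3 ^ n * r ≤ infDist x unitSq)
    push_neg
    rw [div_lt_iff₀ hr] at hn
    linarith
  have htend := tendsto_measure_iInter_atTop (μ := P)
    (fun n => (Ar_measurable (3 ^ n * r)).nullMeasurableSet) hanti ⟨0, measure_ne_top P _⟩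
  rw [hempty] at htend
  simp only [measure_empty] at htend
  have := ge_of_tendsto htend (Filter.Eventually.of_forall step)
  exact le_antisymm this (zero_le)

lemma ae_unitSq (hP : carpetEq P) : ∀ᵐ x ∂P, x ∈ unitSq := by
  rw [MeasureTheory.ae_iff]
  have hsub : {x : E2 | ¬ x ∈ unitSq} ⊆ ⋃ n : ℕ, Ar (1 / (n + 1)) := by
    intro x hx
    have hpos : 0 < infDist x unitSq :=
      (isClosed_unitSq.notMem_iff_infDist_pos unitSq_nonempty).1 hx
    obtain ⟨n, hn⟩ := exists_nat_one_div_lt hpos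
    exact Set.mem_iUnion.2 ⟨n, le_of_lt hn⟩
  refine measure_mono_null hsub ?_
  refine measure_iUnion_null fun n => P_Ar_zero hP ?_
  positivity

end Support

/- ## integration infrastructure -/

section Integration

variable {F : Type*} [NormedAddCommGroup F] [NormedSpace ℝ F]
variable {P : Measure E2} [IsProbabilityMeasure P]

lemma integrable_cont (hP : carpetEq P) {f : E2 → F} (hf : Continuous f) :
    Integrable f P := by
  obtain ⟨C, hC⟩ := isCompact_unitSq.exists_bound_of_continuousOn hf.continuousOn
  refine (integrable_const C).mono' hf.aestronglyMeasurable ?_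
  filter_upwards [ae_unitSq hP] with x hx
  exact hC x hx

lemma integral_self_similar (hP : carpetEq P) (g : E2 → F) (hg : StronglyMeasurable g)
    (hint : ∀ i : Fin 4, Integrable (fun x => g (S i x)) P) :
    ∫ x, g x ∂P = (8:ℝ)⁻¹ • ∫ x, g (S 0 x) ∂P + (8:ℝ)⁻¹ • ∫ x, g (S 1 x) ∂P
      + (3/8:ℝ) • ∫ x, g (S 2 x) ∂P + (3/8:ℝ) • ∫ x, g (S 3 x) ∂P := by
  have hmap : ∀ i : Fin 4, Integrable g (P.map (S i)) := by
    intro i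
    rw [integrable_map_measure (hg.aestronglyMeasurable) (S_meas i).aemeasurable]
    exact hint i
  have hsmul : ∀ (c : ℝ≥0∞) (i : Fin 4), c ≠ ⊤ → Integrable g (c • P.map (S i)) :=
    fun c i hc => (hmap i).smul_measure hc
  have h18 : ((1:ℝ≥0∞)/8) ≠ ⊤ := (ENNReal.div_lt_top (by norm_num) (by norm_num)).ne
  have h38 : ((3:ℝ≥0∞)/8) ≠ ⊤ := (ENNReal.div_lt_top (by norm_num) (by norm_num)).ne
  have e1 : Integrable g ((1/8 : ℝ≥0∞) • P.map (S 0)) := hsmul _ 0 h18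
  have e2 : Integrable g ((1/8 : ℝ≥0∞) • P.map (S 1)) := hsmul _ 1 h18
  have e3 : Integrable g ((3/8 : ℝ≥0∞) • P.map (S 2)) := hsmul _ 2 h38
  have e4 : Integrable g ((3/8 : ℝ≥0∞) • P.map (S 3)) := hsmul _ 3 h38
  have hmapint : ∀ i : Fin 4, ∫ x, g x ∂(P.map (S i)) = ∫ x, g (S i x) ∂P := by
    intro i
    exact integral_map (S_meas i).aemeasurable hg.aestronglyMeasurable
  calc ∫ x, g x ∂P
      = ∫ x, g x ∂((1/8 : ℝ≥0∞) • P.map (S 0) + (1/8 : ℝ≥0∞) • P.map (S 1)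
        + (3/8 : ℝ≥0∞) • P.map (S 2) + (3/8 : ℝ≥0∞) • P.map (S 3)) := by rw [← hP]
    _ = (∫ x, g x ∂((1/8 : ℝ≥0∞) • P.map (S 0)) + ∫ x, g x ∂((1/8 : ℝ≥0∞) • P.map (S 1))
        + ∫ x, g x ∂((3/8 : ℝ≥0∞) • P.map (S 2))) + ∫ x, g x ∂((3/8 : ℝ≥0∞) • P.map (S 3)) := by
        rw [integral_add_measure ((e1.add_measure e2).add_measure e3) e4,
          integral_add_measure (e1.add_measure e2) e3, integral_add_measure e1 e2]
    _ = (8:ℝ)⁻¹ • ∫ x, g (S 0 x) ∂P + (8:ℝ)⁻¹ • ∫ x, g (S 1 x) ∂P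
      + (3/8:ℝ) • ∫ x, g (S 2 x) ∂P + (3/8:ℝ) • ∫ x, g (S 3 x) ∂P := by
        rw [integral_smul_measure, integral_smul_measure, integral_smul_measure,
          integral_smul_measure, hmapint 0, hmapint 1, hmapint 2, hmapint 3]
        norm_num [ENNReal.toReal_div]

end Integration

/- ## transfer lemma -/

def pr : Fin 4 → ℝ := ![8⁻¹, 8⁻¹, 3/8, 3/8]

def pw (w : List (Fin 4)) : ℝ := (w.map pr).prod

lemma pw_nil : pw [] = 1 := rfl

lemma pw_cons (i : Fin 4) (w : List (Fin 4)) : pw (i :: w) = pr i * pw w := by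
  simp [pw]

lemma pw_append (w v : List (Fin 4)) : pw (w ++ v) = pw w * pw v := by
  simp [pw]

lemma pr_pos (i : Fin 4) : 0 < pr i := by
  fin_cases i <;> norm_num [pr]

lemma pw_pos (w : List (Fin 4)) : 0 < pw w := by
  induction w with
  | nil => norm_num [pw_nil]
  | cons i w ih => rw [pw_cons]; exact mul_pos (pr_pos i) ih

lemma Jw_nil : Jw [] = unitSq := Set.image_id unitSq

lemma Jw_cons (i : Fin 4) (w : List (Fin 4)) : Jw (i :: w) = S i '' Jw w := by
  rw [Jw, Jw, show Sw (i :: w) = S i ∘ Sw w from rfl, Set.image_comp]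

lemma Jw_cons_subset (i : Fin 4) (w : List (Fin 4)) : Jw (i :: w) ⊆ Jset i := by
  rw [Jw_cons]
  exact Set.image_mono (Jw_subset w)

section Transfer

variable {F : Type*} [NormedAddCommGroup F] [NormedSpace ℝ F]
variable {P : Measure E2} [IsProbabilityMeasure P]

lemma indicator_strongly_measurable {f : E2 → F} (hf : Continuous f) (v : List (Fin 4)) :
    StronglyMeasurable ((Jw v).indicator f) :=
  hf.stronglyMeasurable.indicator (Jw_measurable v)

lemma indicator_comp_integrable {f : E2 → F} (hf : Continuous f) (v : List (Fin 4))
    (g : E2 → E2) (hg : Measurable g) :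
    Integrable (fun x => (Jw v).indicator f (g x)) P := by
  obtain ⟨C, hC⟩ := isCompact_unitSq.exists_bound_of_continuousOn hf.continuousOn
  refine (integrable_const (max C 0)).mono'
    (((indicator_strongly_measurable hf v).comp_measurable hg).aestronglyMeasurable) ?_
  refine Filter.Eventually.of_forall fun x => ?_
  by_cases h : g x ∈ Jw v
  · rw [Set.indicator_of_mem h]
    exact le_max_of_le_left (hC _ (Jw_subset v h))
  · rw [Set.indicator_of_notMem h]
    simp

lemma transfer (hP : carpetEq P) {f : E2 → F} (hf : Continuous f) (w : List (Fin 4)) :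
    ∫ x, (Jw w).indicator f x ∂P = pw w • ∫ x, f (Sw w x) ∂P := by
  induction w generalizing f with
  | nil =>
      rw [pw_nil, one_smul]
      refine integral_congr_ae ?_
      filter_upwards [ae_unitSq hP] with x hx
      rw [Jw_nil, Set.indicator_of_mem hx]
      rfl
  | cons i w ih =>
      have hzero : ∀ j : Fin 4, j ≠ i → ∫ x, (Jw (i :: w)).indicator f (S j x) ∂P = 0 := by
        intro j hj
        rw [← integral_zero E2 F (μ := P)]
        refine integral_congr_ae ?_
        filter_upwards [ae_unitSq hP] with x hx
        refine Set.indicator_of_notMem (fun hmem => ?_) f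
        exact Jset_disjoint (Ne.symm hj) _ (Jw_cons_subset i w hmem) ⟨x, hx, rfl⟩
      have hii : ∀ x, (Jw (i :: w)).indicator f (S i x) =
          (Jw w).indicator (fun y => f (S i y)) x := by
        intro x
        by_cases h : x ∈ Jw w
        · rw [Set.indicator_of_mem h, Set.indicator_of_mem]
          rw [Jw_cons]; exact Set.mem_image_of_mem _ h
        · rw [Set.indicator_of_notMem h, Set.indicator_of_notMem]
          rw [Jw_cons]
          exact fun hc => h (((S_inj i).mem_set_image).1 hc)
      have hmain := integral_self_similar hP ((Jw (i :: w)).indicator f)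
        (indicator_strongly_measurable hf _)
        (fun j => indicator_comp_integrable hf _ (S j) (S_meas j))
      have hIH : ∫ x, (Jw (i :: w)).indicator f (S i x) ∂P
          = pw w • ∫ x, f (Sw (i :: w) x) ∂P := by
        simp only [hii]
        exact ih (hf.comp (S_cont i))
      rw [pw_cons, mul_smul]
      have hcase : i = 0 ∨ i = 1 ∨ i = 2 ∨ i = 3 := by fin_cases i <;> simp
      rcases hcase with rfl | rfl | rfl | rfl
      · rw [hmain, hzero 1 (by decide), hzero 2 (by decide), hzero 3 (by decide), hIH]
        simp only [smul_zero, add_zero, zero_add]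
        norm_num [pr]
      · rw [hmain, hzero 0 (by decide), hzero 2 (by decide), hzero 3 (by decide), hIH]
        simp only [smul_zero, add_zero, zero_add]
        norm_num [pr]
      · rw [hmain, hzero 0 (by decide), hzero 1 (by decide), hzero 3 (by decide), hIH]
        simp only [smul_zero, add_zero, zero_add]
        norm_num [pr, Matrix.cons_val_two, Matrix.cons_val_three]
      · rw [hmain, hzero 0 (by decide), hzero 1 (by decide), hzero 2 (by decide), hIH]
        simp only [smul_zero, add_zero, zero_add]
        norm_num [pr, Matrix.cons_val_two, Matrix.cons_val_three]

lemma transfer_set (hP : carpetEq P) {f : E2 → F} (hf : Continuous f) (w : List (Fin 4)) :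
    ∫ x in Jw w, f x ∂P = pw w • ∫ x, f (Sw w x) ∂P := by
  rw [← integral_indicator (Jw_measurable w)]
  exact transfer hP hf w

lemma P_Jw (hP : carpetEq P) (w : List (Fin 4)) : (P (Jw w)).toReal = pw w := by
  have h := transfer_set hP (continuous_const : Continuous (fun _ : E2 => (1:ℝ))) w
  rw [setIntegral_const, integral_const] at h
  simpa [Measure.real] using h

end Transfer

/- ## moments of P -/

lemma pt_apply0 (a b : ℝ) : pt a b 0 = a := rfl
lemma pt_apply1 (a b : ℝ) : pt a b 1 = b := rfl

lemma cont_normsq (q : E2) : Continuous (fun x : E2 => ‖x - q‖^2) :=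
  ((continuous_id.sub continuous_const).norm).pow 2

section Moments

variable {P : Measure E2} [IsProbabilityMeasure P]

def bary (P : Measure E2) : E2 := ∫ x, x ∂P

def Vval (P : Measure E2) : ℝ := ∫ x, ‖x - bary P‖^2 ∂P

lemma integral_S (hP : carpetEq P) (i : Fin 4) :
    ∫ x, S i x ∂P = (3:ℝ)⁻¹ • bary P + tv i := by
  simp only [S_apply]
  rw [integral_add (by exact (integrable_cont hP continuous_id).smul (3:ℝ)⁻¹)
    (integrable_const _), integral_smul, integral_const]
  simp [bary]

lemma bary_eq (hP : carpetEq P) : bary P = pt (1/2) (3/4) := by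
  have hb := integral_self_similar hP (fun x => x) stronglyMeasurable_id
    (fun i => integrable_cont hP (S_cont i))
  simp only [show ∀ i : Fin 4, (∫ x, S i x ∂P) = (3:ℝ)⁻¹ • bary P + tv i from integral_S hP] at hb
  have hb' : bary P = (8:ℝ)⁻¹ • ((3:ℝ)⁻¹ • bary P + tv 0) + (8:ℝ)⁻¹ • ((3:ℝ)⁻¹ • bary P + tv 1)
      + (3/8:ℝ) • ((3:ℝ)⁻¹ • bary P + tv 2) + (3/8:ℝ) • ((3:ℝ)⁻¹ • bary P + tv 3) := hb
  have h0 := congrArg (fun v : E2 => v 0) hb'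
  have h1 := congrArg (fun v : E2 => v 1) hb'
  simp only [PiLp.add_apply, PiLp.smul_apply, tv, pt_apply0, pt_apply1, smul_eq_mul] at h0 h1
  rw [pt_ext (bary P)]
  have e0 : bary P 0 = 1/2 := by linarith
  have e1 : bary P 1 = 3/4 := by linarith
  rw [e0, e1]

lemma integrable_normsq (hP : carpetEq P) (q : E2) :
    Integrable (fun x => ‖x - q‖^2) P :=
  integrable_cont hP (cont_normsq q)

lemma integrable_inner' (hP : carpetEq P) (c q : E2) :
    Integrable (fun x => (inner ℝ (x - q) c : ℝ)) P :=
  integrable_cont hP ((continuous_id.sub continuous_const).inner continuous_const)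

lemma var_shift (hP : carpetEq P) (q : E2) :
    ∫ x, ‖x - q‖^2 ∂P = Vval P + ‖bary P - q‖^2 := by
  have hpt : ∀ x : E2, ‖x - q‖^2
      = ‖x - bary P‖^2 + (2 * inner ℝ (x - bary P) (bary P - q) + ‖bary P - q‖^2) := by
    intro x
    rw [show x - q = (x - bary P) + (bary P - q) by abel, norm_add_sq_real]
    ring
  have hcongr : ∫ x, ‖x - q‖^2 ∂P = ∫ x, (‖x - bary P‖^2
      + (2 * inner ℝ (x - bary P) (bary P - q) + ‖bary P - q‖^2)) ∂P :=
    integral_congr_ae (Filter.Eventually.of_forall hpt)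
  rw [hcongr]
  have hi1 : Integrable (fun x : E2 => 2 * (inner ℝ (x - bary P) (bary P - q) : ℝ)) P :=
    (integrable_inner' hP (bary P - q) (bary P)).const_mul 2
  have hi2 : Integrable (fun x : E2 =>
      2 * (inner ℝ (x - bary P) (bary P - q) : ℝ) + ‖bary P - q‖^2) P :=
    hi1.add (integrable_const _)
  rw [integral_add (integrable_normsq hP (bary P)) hi2]
  rw [integral_add hi1 (integrable_const _)]
  rw [MeasureTheory.integral_const_mul]
  have hz : ∫ x, (inner ℝ (x - bary P) (bary P - q) : ℝ) ∂P = 0 := by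
    have hc : ∀ x : E2, (inner ℝ (x - bary P) (bary P - q) : ℝ)
        = inner ℝ (bary P - q) (x - bary P) := fun x => real_inner_comm _ _
    simp only [hc]
    rw [integral_inner (by exact (integrable_cont hP continuous_id).sub (integrable_const _))]
    have hid : Integrable (fun x : E2 => x) P := integrable_cont hP continuous_id
    rw [integral_sub hid (integrable_const (bary P)), integral_const]
    simp [bary]
  rw [hz]
  simp [Vval, measure_univ]

lemma E2_norm_sq (v : E2) : ‖v‖^2 = (v 0)^2 + (v 1)^2 := by
  rw [EuclideanSpace.norm_eq, Real.sq_sqrt (by positivity)]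
  rw [Fin.sum_univ_two]
  simp [Real.norm_eq_abs, sq_abs]

lemma int_normsq_S (hP : carpetEq P) (i : Fin 4) (q : E2) :
    ∫ x, ‖S i x - q‖^2 ∂P
      = (9:ℝ)⁻¹ * (Vval P + ‖bary P - ((3:ℝ) • q - (3:ℝ) • tv i)‖^2) := by
  have hpt : ∀ x : E2, ‖S i x - q‖^2 = (9:ℝ)⁻¹ * ‖x - ((3:ℝ) • q - (3:ℝ) • tv i)‖^2 := by
    intro x
    rw [S_apply]
    rw [show (3:ℝ)⁻¹ • x + tv i - q = (3:ℝ)⁻¹ • (x - ((3:ℝ) • q - (3:ℝ) • tv i)) by module]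
    rw [norm_smul]
    rw [mul_pow]
    norm_num
  have hcongr : ∫ x, ‖S i x - q‖^2 ∂P
      = ∫ x, (9:ℝ)⁻¹ * ‖x - ((3:ℝ) • q - (3:ℝ) • tv i)‖^2 ∂P :=
    integral_congr_ae (Filter.Eventually.of_forall hpt)
  rw [hcongr, MeasureTheory.integral_const_mul, var_shift hP]

lemma Vval_eq (hP : carpetEq P) : Vval P = 7/32 := by
  have hmain' := integral_self_similar hP (fun x => ‖x - bary P‖^2)
    (cont_normsq _).stronglyMeasurable
    (fun i => integrable_cont hP ((cont_normsq _).comp (S_cont i)))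
  have hmain : Vval P = (8:ℝ)⁻¹ • ∫ x, ‖S 0 x - bary P‖^2 ∂P
      + (8:ℝ)⁻¹ • ∫ x, ‖S 1 x - bary P‖^2 ∂P
      + (3/8:ℝ) • ∫ x, ‖S 2 x - bary P‖^2 ∂P
      + (3/8:ℝ) • ∫ x, ‖S 3 x - bary P‖^2 ∂P := hmain'
  have hterm : ∀ i : Fin 4, ∫ x, ‖S i x - bary P‖^2 ∂P
      = (9:ℝ)⁻¹ * (Vval P + ‖bary P - ((3:ℝ) • bary P - (3:ℝ) • tv i)‖^2) :=
    fun i => int_normsq_S hP i (bary P)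
  have hb0 : bary P 0 = 1/2 := by rw [bary_eq hP]; rfl
  have hb1 : bary P 1 = 3/4 := by rw [bary_eq hP]; rfl
  have hnorm : ∀ i : Fin 4, ‖bary P - ((3:ℝ) • bary P - (3:ℝ) • tv i)‖^2
      = ((3:ℝ) * tv i 0 - 2 * bary P 0)^2 + ((3:ℝ) * tv i 1 - 2 * bary P 1)^2 := by
    intro i
    rw [E2_norm_sq]
    simp only [PiLp.sub_apply, PiLp.smul_apply, smul_eq_mul]
    ring
  have htv : ∀ i : Fin 4, ‖bary P - ((3:ℝ) • bary P - (3:ℝ) • tv i)‖^2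
      = ![13/4, 13/4, 5/4, 5/4] i := by
    intro i
    rw [hnorm i, hb0, hb1]
    fin_cases i <;> norm_num [tv, pt_apply0, pt_apply1]
  rw [hterm 0, hterm 1, hterm 2, hterm 3, htv 0, htv 1, htv 2, htv 3] at hmain
  norm_num [smul_eq_mul, Matrix.cons_val_two, Matrix.cons_val_three] at hmain
  linarith

end Moments

/- ## final assembly -/

lemma Sw_inj (w : List (Fin 4)) : Function.Injective (Sw w) := by
  induction w with
  | nil => exact fun a b h => h
  | cons i w ih =>
      intro a b h
      exact ih ((S_inj i) h)

lemma Jw_single (i : Fin 4) : Jw [i] = Jset i := rfl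

lemma Jw_append_img (w v : List (Fin 4)) : Jw (w ++ v) = Sw w '' Jw v := by
  rw [Jw, Jw, show Sw (w ++ v) = Sw w ∘ Sw v from funext (Sw_append w v), Set.image_comp]

lemma Jw_pair_disjoint (w : List (Fin 4)) {i j : Fin 4} (h : i ≠ j) :
    Disjoint (Jw (w ++ [i])) (Jw (w ++ [j])) := by
  rw [Set.disjoint_left]
  rintro x hx1 hx2
  rw [Jw_append_img, Jw_single] at hx1 hx2
  obtain ⟨a, ha, hax⟩ := hx1
  obtain ⟨b, hb, hbx⟩ := hx2
  have : a = b := Sw_inj w (hax.trans hbx.symm)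
  exact Jset_disjoint h b (this ▸ ha) hb

lemma pow9 (n : ℕ) : ((3:ℝ)⁻¹ ^ n)^2 = (9:ℝ)⁻¹ ^ n := by
  rw [← pow_mul, mul_comm, pow_mul]
  norm_num

section Final

variable {P : Measure E2} [IsProbabilityMeasure P]

lemma integral_Sw (hP : carpetEq P) (w : List (Fin 4)) :
    ∫ x, Sw w x ∂P = Sw w (bary P) := by
  induction w with
  | nil => rfl
  | cons i w ih =>
      have h1 : ∀ x, Sw (i :: w) x = (3:ℝ)⁻¹ • Sw w x + tv i := by
        intro x; rw [Sw_cons, S_apply]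
      have hcongr : ∫ x, Sw (i :: w) x ∂P = ∫ x, ((3:ℝ)⁻¹ • Sw w x + tv i) ∂P :=
        integral_congr_ae (Filter.Eventually.of_forall h1)
      have hsw : Integrable (fun x => (3:ℝ)⁻¹ • Sw w x) P :=
        (integrable_cont hP (Sw_cont w)).smul ((3:ℝ)⁻¹)
      rw [hcongr, integral_add hsw (integrable_const _), integral_smul, integral_const, ih]
      simp [Sw_cons, S_apply]

lemma Err_eq (hP : carpetEq P) (w : List (Fin 4)) :
    Err P w = pw w * ((9:ℝ)⁻¹ ^ w.length) * Vval P := by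
  have h1 : Err P w = pw w • ∫ x, ‖Sw w x - Sw w (pt (1/2) (3/4))‖^2 ∂P :=
    transfer_set hP (cont_normsq (Sw w (pt (1/2) (3/4)))) w
  have h2 : ∀ x : E2, ‖Sw w x - Sw w (pt (1/2) (3/4))‖^2
      = ((9:ℝ)⁻¹ ^ w.length) * ‖x - pt (1/2) (3/4)‖^2 := by
    intro x
    rw [Sw_sub, norm_smul, mul_pow]
    rw [show ‖(3:ℝ)⁻¹ ^ w.length‖ = (3:ℝ)⁻¹ ^ w.length by
      rw [Real.norm_eq_abs, abs_of_nonneg (by positivity)]]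
    rw [pow9]
  have h3 : ∫ x, ‖Sw w x - Sw w (pt (1/2) (3/4))‖^2 ∂P
      = ∫ x, ((9:ℝ)⁻¹ ^ w.length) * ‖x - pt (1/2) (3/4)‖^2 ∂P :=
    integral_congr_ae (Filter.Eventually.of_forall h2)
  rw [h1, h3, MeasureTheory.integral_const_mul, var_shift hP, ← bary_eq hP]
  simp [smul_eq_mul]
  ring

lemma pw_single (w : List (Fin 4)) (i : Fin 4) : pw (w ++ [i]) = pw w * pr i := by
  rw [pw_append]
  simp [pw, pw_cons]

lemma P_pair (hP : carpetEq P) (w : List (Fin 4)) :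
    (P (Jw (w ++ [0]) ∪ Jw (w ++ [1]))).toReal = pw w * 4⁻¹ := by
  rw [measure_union (Jw_pair_disjoint w (by decide)) (Jw_measurable _)]
  rw [ENNReal.toReal_add (measure_ne_top P _) (measure_ne_top P _)]
  rw [P_Jw hP, P_Jw hP, pw_single, pw_single]
  have h0 : pr 0 = 8⁻¹ := rfl
  have h1 : pr 1 = 8⁻¹ := rfl
  rw [h0, h1]
  ring

lemma midpt : (2:ℝ)⁻¹ • (S 0 (pt (1/2) (3/4)) + S 1 (pt (1/2) (3/4))) = pt (1/2) (1/4) := by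
  ext j
  fin_cases j <;>
  · show (2:ℝ)⁻¹ • (S 0 (pt (1/2) (3/4)) + S 1 (pt (1/2) (3/4))) _ = pt (1/2) (1/4) _
    simp [S, pt, PiLp.add_apply, PiLp.smul_apply, smul_eq_mul]
    norm_num

lemma ctr_pair (hP : carpetEq P) (w : List (Fin 4)) :
    ctr P (Jw (w ++ [0]) ∪ Jw (w ++ [1])) = Sw w (pt (1/2) (1/4)) := by
  have hio : ∀ v : List (Fin 4), IntegrableOn (fun x : E2 => x) (Jw v) P :=
    fun v => (integrable_cont hP continuous_id).integrableOn
  have hint : ∫ x in (Jw (w ++ [0]) ∪ Jw (w ++ [1])), x ∂P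
      = ∫ x in Jw (w ++ [0]), x ∂P + ∫ x in Jw (w ++ [1]), x ∂P :=
    setIntegral_union (Jw_pair_disjoint w (by decide)) (Jw_measurable _) (hio _) (hio _)
  have hseg : ∀ i : Fin 4, ∫ x in Jw (w ++ [i]), x ∂P
      = (pw w * pr i) • Sw w (S i (bary P)) := by
    intro i
    have ht := transfer_set hP ((continuous_id' : Continuous fun x : E2 => x)) (w ++ [i]) (P := P)
    rw [ht, integral_Sw hP (w ++ [i]), pw_single]
    have hx : Sw (w ++ [i]) (bary P) = Sw w (S i (bary P)) := Sw_append w ([i]) (bary P)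
    rw [hx]
  rw [ctr, hint, hseg 0, hseg 1, P_pair hP w]
  have hpr0 : pr 0 = 8⁻¹ := rfl
  have hpr1 : pr 1 = 8⁻¹ := rfl
  rw [hpr0, hpr1]
  have hpw := pw_pos w
  rw [← smul_add, smul_smul]
  rw [show (pw w * 4⁻¹)⁻¹ * (pw w * 8⁻¹) = 2⁻¹ by field_simp; ring]
  rw [show Sw w (S 0 (bary P)) + Sw w (S 1 (bary P))
      = Sw w (S 0 (bary P)) + Sw w (S 1 (bary P)) from rfl]
  rw [← Sw_midpoint, bary_eq hP, midpt]

theorem Epair_12' (hP : carpetEq P) (w : List (Fin 4)) :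
    Epair P w 0 1 = (13/84) * Err P w := by
  have hmid : ctr P (Jw (w ++ [0]) ∪ Jw (w ++ [1])) = Sw w (pt (1/2) (1/4)) := ctr_pair hP w
  have hEp : Epair P w 0 1 = ∫ x in (Jw (w ++ [0]) ∪ Jw (w ++ [1])),
      ‖x - Sw w (pt (1/2) (1/4))‖^2 ∂P := by
    rw [Epair, hmid]
  have hio : ∀ v : List (Fin 4), IntegrableOn (fun x : E2 => ‖x - Sw w (pt (1/2) (1/4))‖^2)
      (Jw v) P := fun v => (integrable_normsq hP _).integrableOn
  have hsplit : ∫ x in (Jw (w ++ [0]) ∪ Jw (w ++ [1])), ‖x - Sw w (pt (1/2) (1/4))‖^2 ∂P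
      = ∫ x in Jw (w ++ [0]), ‖x - Sw w (pt (1/2) (1/4))‖^2 ∂P
        + ∫ x in Jw (w ++ [1]), ‖x - Sw w (pt (1/2) (1/4))‖^2 ∂P :=
    setIntegral_union (Jw_pair_disjoint w (by decide)) (Jw_measurable _) (hio _) (hio _)
  have hseg : ∀ i : Fin 4, ∫ x in Jw (w ++ [i]), ‖x - Sw w (pt (1/2) (1/4))‖^2 ∂P
      = (pw w * pr i) * (((9:ℝ)⁻¹ ^ w.length)
          * ((9:ℝ)⁻¹ * (Vval P + ‖bary P - ((3:ℝ) • pt (1/2) (1/4) - (3:ℝ) • tv i)‖^2))) := by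
    intro i
    rw [transfer_set hP (cont_normsq _) (w ++ [i]), pw_single]
    have h2 : ∀ x : E2, ‖Sw (w ++ [i]) x - Sw w (pt (1/2) (1/4))‖^2
        = ((9:ℝ)⁻¹ ^ w.length) * ‖S i x - pt (1/2) (1/4)‖^2 := by
      intro x
      have hx : Sw (w ++ [i]) x = Sw w (S i x) := Sw_append w ([i]) x
      rw [hx, Sw_sub, norm_smul, mul_pow]
      rw [show ‖(3:ℝ)⁻¹ ^ w.length‖ = (3:ℝ)⁻¹ ^ w.length by
        rw [Real.norm_eq_abs, abs_of_nonneg (by positivity)]]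
      rw [pow9]
    have h3 : ∫ x, ‖Sw (w ++ [i]) x - Sw w (pt (1/2) (1/4))‖^2 ∂P
        = ∫ x, ((9:ℝ)⁻¹ ^ w.length) * ‖S i x - pt (1/2) (1/4)‖^2 ∂P :=
      integral_congr_ae (Filter.Eventually.of_forall h2)
    rw [h3, MeasureTheory.integral_const_mul, int_normsq_S hP i (pt (1/2) (1/4)),
      smul_eq_mul]
  have hn0 : ‖bary P - ((3:ℝ) • pt (1/2) (1/4) - (3:ℝ) • tv 0)‖^2 = 1 := by
    rw [bary_eq hP, E2_norm_sq]
    simp [PiLp.sub_apply, PiLp.smul_apply, tv, pt, smul_eq_mul]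
    norm_num
  have hn1 : ‖bary P - ((3:ℝ) • pt (1/2) (1/4) - (3:ℝ) • tv 1)‖^2 = 1 := by
    rw [bary_eq hP, E2_norm_sq]
    simp [PiLp.sub_apply, PiLp.smul_apply, tv, pt, smul_eq_mul]
    norm_num
  rw [hEp, hsplit, hseg 0, hseg 1, hn0, hn1, Err_eq hP w, Vval_eq hP]
  have hpr0 : pr 0 = 8⁻¹ := rfl
  have hpr1 : pr 1 = 8⁻¹ := rfl
  rw [hpr0, hpr1]
  ring

end Final


theorem Epair_12 (P : Measure E2) [IsProbabilityMeasure P] (hP : carpetEq P)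
    (w : List (Fin 4)) :
    Epair P w 0 1 = (13/84) * Err P w := by
  exact Epair_12' hP w
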